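/- arXiv:1712.05072 — 2 statements merged into one kernel-verified Lean document; each statement's English description precedes it below -/
import Mathlib

section
/- Let X_1, …, X_n, X be independent random variables each uniformly distributed on (0,1), with X_{(1)} ≤ … ≤ X_{(n)} the order statistics of X_1, …, X_n. Let 1 ≤ l ≤ n−1 be an integer and let α satisfy l/(n+1) ≤ α ≤ (l+1)/(n+1). Define q̂ = (1 − α(n+1) + l)·X_{(l)} + (α(n+1) − l)·X_{(l+1)}. Then P(X ≤ q̂) = α. -/
open MeasureTheory

/-- The `l`-th order statistic (1-based index `l = (k : ℕ) + 1`) of the finite family of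
random variables `X i`, realized by sorting the sample at each outcome `ω`. -/
noncomputable def orderStat {Ω : Type*} {n : ℕ} (X : Fin n → Ω → ℝ) (k : Fin n) (ω : Ω) : ℝ :=
  X (Tuple.sort (fun i => X i ω) k) ω

namespace CoverageAux

open Finset

/-- The `k`-th smallest value of a tuple. -/
noncomputable def sv {n : ℕ} (v : Fin n → ℝ) (k : Fin n) : ℝ := v (Tuple.sort v k)

lemma orderStat_eq_sv {Ω : Type*} {n : ℕ} (X : Fin n → Ω → ℝ) (k : Fin n) (ω : Ω) :
    orderStat X k ω = sv (fun i => X i ω) k := rfl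

lemma card_filter_comp {n : ℕ} (σ : Equiv.Perm (Fin n)) (p : Fin n → Prop) [DecidablePred p] :
    #(univ.filter fun i => p (σ i)) = #(univ.filter p) := by
  refine Finset.card_equiv σ fun i => ?_
  simp

lemma sv_le_iff {n : ℕ} (v : Fin n → ℝ) (k : Fin n) (t : ℝ) :
    sv v k ≤ t ↔ (k : ℕ) + 1 ≤ #(univ.filter fun i => v i ≤ t) := by
  have h := Tuple.lt_card_le_iff_apply_le_of_monotone (f := v ∘ Tuple.sort v) (a := t)
    (Tuple.monotone_sort v) (j := k)
  have hc : #(univ.filter fun i => (v ∘ Tuple.sort v) i ≤ t)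
      = #(univ.filter fun i => v i ≤ t) :=
    card_filter_comp (Tuple.sort v) (fun i => v i ≤ t)
  rw [hc] at h
  rw [show sv v k = (v ∘ Tuple.sort v) k from rfl, ← h]
  omega

lemma le_sv_iff {n : ℕ} (v : Fin n → ℝ) (k : Fin n) (t : ℝ) :
    t ≤ sv v k ↔ #(univ.filter fun i => v i < t) ≤ (k : ℕ) := by
  have hmono : Monotone (v ∘ Tuple.sort v) := Tuple.monotone_sort v
  have hc : #(univ.filter fun i => (v ∘ Tuple.sort v) i < t)
      = #(univ.filter fun i => v i < t) :=
    card_filter_comp (Tuple.sort v) (fun i => v i < t)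
  rw [← hc]
  set w := v ∘ Tuple.sort v with hw
  have hsv : sv v k = w k := rfl
  rw [hsv]
  constructor
  · intro h
    calc #(univ.filter fun i => w i < t) ≤ #(Finset.Iio k) := by
          refine Finset.card_le_card fun j hj => ?_
          simp only [Finset.mem_filter, Finset.mem_univ, true_and] at hj
          simp only [Finset.mem_Iio]
          by_contra hk
          exact absurd (h.trans (hmono (not_lt.mp hk))) (not_le.mpr hj)
      _ = (k : ℕ) := Fin.card_Iio k
  · intro h
    by_contra hlt
    push_neg at hlt
    have hsub : Finset.Iic k ⊆ univ.filter fun i => w i < t := by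
      intro j hj
      simp only [Finset.mem_Iic] at hj
      simp only [Finset.mem_filter, Finset.mem_univ, true_and]
      exact lt_of_le_of_lt (hmono hj) hlt
    have := Finset.card_le_card hsub
    rw [Fin.card_Iic] at this
    omega

lemma measurable_count_le {n : ℕ} (t : ℝ) :
    Measurable fun v : Fin n → ℝ => #(univ.filter fun i => v i ≤ t) := by
  simp_rw [Finset.card_filter]
  refine Finset.measurable_sum _ fun i _ => Measurable.ite ?_ measurable_const measurable_const
  exact measurableSet_le (measurable_pi_apply i) measurable_const

lemma measurable_sv {n : ℕ} (k : Fin n) : Measurable fun v : Fin n → ℝ => sv v k := by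
  refine measurable_of_Iic fun t => ?_
  have : (fun v : Fin n → ℝ => sv v k) ⁻¹' Set.Iic t
      = (fun v : Fin n → ℝ => #(univ.filter fun i => v i ≤ t)) ⁻¹' Set.Ici ((k : ℕ) + 1) := by
    ext v
    simp [sv_le_iff]
  rw [this]
  exact measurable_count_le t measurableSet_Ici

lemma sv_mem {n : ℕ} {v : Fin n → ℝ} {s : Set ℝ} (h : ∀ i, v i ∈ s) (k : Fin n) :
    sv v k ∈ s := h _


section Measures
open MeasureTheory


noncomputable def μ1 : Measure ℝ := volume.restrict (Set.Ioo 0 1)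

instance : IsProbabilityMeasure μ1 :=
  ⟨by rw [μ1, Measure.restrict_apply_univ, Real.volume_Ioo]; norm_num⟩

instance : NullSingletonClass μ1 := ⟨fun x => by
  rw [μ1, Measure.restrict_apply (measurableSet_singleton x)]
  exact measure_mono_null Set.inter_subset_left (measure_singleton x)⟩

/-- The product of `n` uniform measures on `(0,1)`. -/
noncomputable def μp (n : ℕ) : Measure (Fin n → ℝ) := Measure.pi fun _ => μ1

instance (n : ℕ) : IsProbabilityMeasure (μp n) := by
  unfold μp; infer_instance

lemma ae_mem_Ioo (n : ℕ) : ∀ᵐ y ∂(μp n), ∀ i, y i ∈ Set.Ioo (0:ℝ) 1 := by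
  have h : {y : Fin n → ℝ | ∀ i, y i ∈ Set.Ioo (0:ℝ) 1}
      = Set.univ.pi fun _ => Set.Ioo (0:ℝ) 1 := by
    ext y; simp [Set.mem_pi]
  rw [Filter.eventually_iff]
  rw [mem_ae_iff]
  have hms : MeasurableSet (Set.univ.pi fun _ : Fin n => Set.Ioo (0:ℝ) 1) :=
    MeasurableSet.univ_pi fun _ => measurableSet_Ioo
  have h1 : μp n (Set.univ.pi fun _ => Set.Ioo (0:ℝ) 1) = 1 := by
    rw [μp, Measure.pi_pi]
    have : μ1 (Set.Ioo 0 1) = 1 := by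
      rw [μ1, Measure.restrict_apply measurableSet_Ioo, Set.inter_self, Real.volume_Ioo]
      norm_num
    simp [this]
  have := prob_compl_eq_zero_iff (μ := μp n) hms |>.mpr h1
  rw [show {y : Fin n → ℝ | ∀ i, y i ∈ Set.Ioo (0:ℝ) 1} = Set.univ.pi fun _ => Set.Ioo (0:ℝ) 1 from h]
  exact this

lemma μ1_Iic {c : ℝ} (hc : c ∈ Set.Ioo (0:ℝ) 1) : μ1 (Set.Iic c) = ENNReal.ofReal c := by
  rw [μ1, Measure.restrict_apply measurableSet_Iic]
  have : Set.Iic c ∩ Set.Ioo 0 1 = Set.Ioc 0 c := by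
    ext t
    simp only [Set.mem_inter_iff, Set.mem_Iic, Set.mem_Ioo, Set.mem_Ioc]
    exact ⟨fun h => ⟨h.2.1, h.1⟩, fun h => ⟨h.2, h.1, lt_of_le_of_lt h.2 hc.2⟩⟩
  rw [this, Real.volume_Ioc, sub_zero]

lemma fubini_last (n : ℕ) (g : (Fin n → ℝ) → ℝ) (hg : Measurable g)
    (hg01 : ∀ y : Fin n → ℝ, (∀ i, y i ∈ Set.Ioo (0:ℝ) 1) → g y ∈ Set.Ioo (0:ℝ) 1) :
    μp (n+1) {x | x (Fin.last n) ≤ g (fun i => x i.castSucc)}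
      = ∫⁻ y, ENNReal.ofReal (g y) ∂(μp n) := by
  have hT : MeasurableSet {p : ℝ × (Fin n → ℝ) | p.1 ≤ g p.2} :=
    measurableSet_le measurable_fst (hg.comp measurable_snd)
  have hmp := measurePreserving_piFinSuccAbove (fun _ : Fin (n+1) => μ1) (Fin.last n)
  have hpre : {x : Fin (n+1) → ℝ | x (Fin.last n) ≤ g (fun i => x i.castSucc)}
      = (MeasurableEquiv.piFinSuccAbove (fun _ => ℝ) (Fin.last n)) ⁻¹' {p | p.1 ≤ g p.2} := by
    ext x
    simp only [Set.mem_preimage, Set.mem_setOf_eq, MeasurableEquiv.piFinSuccAbove_apply, Fin.insertNthEquiv_symm_apply]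
    have hrem : (Fin.last n).removeNth x = fun i => x i.castSucc := by
      funext i; simp [Fin.removeNth, Fin.succAbove_last]
    rw [hrem]
  rw [show μp (n+1) = Measure.pi fun _ => μ1 from rfl, hpre,
    hmp.measure_preimage hT.nullMeasurableSet, Measure.prod_apply_symm hT]
  refine lintegral_congr_ae ?_
  filter_upwards [ae_mem_Ioo n] with y hy
  have : (fun t => (t, y)) ⁻¹' {p : ℝ × (Fin n → ℝ) | p.1 ≤ g p.2} = Set.Iic (g y) := by
    ext t; simp
  rw [this, μ1_Iic (hg01 y hy)]

/-- Number of strictly smaller entries: the rank of coordinate `m`. -/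
noncomputable def cnt {N : ℕ} (x : Fin N → ℝ) (m : Fin N) : ℕ :=
  #(univ.filter fun i => x i < x m)

lemma measurable_cnt {N : ℕ} (m : Fin N) : Measurable fun x : Fin N → ℝ => cnt x m := by
  unfold cnt
  simp_rw [Finset.card_filter]
  refine Finset.measurable_sum _ fun i _ => Measurable.ite ?_ measurable_const measurable_const
  exact measurableSet_lt (measurable_pi_apply i) (measurable_pi_apply m)

lemma measurableSet_cnt_eq {N : ℕ} (m : Fin N) (j : ℕ) :
    MeasurableSet {x : Fin N → ℝ | cnt x m = j} :=
  measurable_cnt m (measurableSet_singleton j)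

lemma measurePreserving_comp_perm (N : ℕ) (σ : Equiv.Perm (Fin N)) :
    MeasurePreserving (fun x : Fin N → ℝ => x ∘ σ) (μp N) (μp N) := by
  have h := measurePreserving_piCongrLeft (fun _ : Fin N => μ1) σ.symm
  have hfun : ⇑(MeasurableEquiv.piCongrLeft (fun _ : Fin N => ℝ) σ.symm)
      = fun x : Fin N → ℝ => x ∘ σ := by
    funext x
    funext j
    conv_lhs => rw [show j = σ.symm (σ j) by simp]
    rw [MeasurableEquiv.piCongrLeft_apply_apply]
    rfl
  rw [hfun] at h
  exact h

lemma cnt_comp_perm {N : ℕ} (x : Fin N → ℝ) (σ : Equiv.Perm (Fin N)) (m : Fin N) :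
    cnt (x ∘ σ) m = cnt x (σ m) := card_filter_comp σ fun i => x i < x (σ m)

lemma measure_cnt_eq_of_swap {N : ℕ} (m m' : Fin N) (j : ℕ) :
    μp N {x | cnt x m = j} = μp N {x | cnt x m' = j} := by
  have h := measurePreserving_comp_perm N (Equiv.swap m m')
  have hpre : (fun x : Fin N → ℝ => x ∘ Equiv.swap m m') ⁻¹' {x | cnt x m' = j}
      = {x | cnt x m = j} := by
    ext x
    simp only [Set.mem_preimage, Set.mem_setOf_eq, cnt_comp_perm, Equiv.swap_apply_right]
  rw [← hpre, h.measure_preimage (measurableSet_cnt_eq m' j).nullMeasurableSet]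

lemma null_eq_coord {N : ℕ} (i j : Fin (N+1)) (hij : i ≠ j) :
    μp (N+1) {x | x i = x j} = 0 := by
  obtain ⟨j', hj'⟩ := Fin.exists_succAbove_eq (Ne.symm hij)
  have hT : MeasurableSet {p : ℝ × (Fin N → ℝ) | p.1 = p.2 j'} :=
    measurableSet_eq_fun measurable_fst ((measurable_pi_apply j').comp measurable_snd)
  have hmp := measurePreserving_piFinSuccAbove (fun _ : Fin (N+1) => μ1) i
  have hpre : {x : Fin (N+1) → ℝ | x i = x j}
      = (MeasurableEquiv.piFinSuccAbove (fun _ => ℝ) i) ⁻¹' {p | p.1 = p.2 j'} := by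
    ext x
    simp only [Set.mem_preimage, Set.mem_setOf_eq, MeasurableEquiv.piFinSuccAbove_apply,
      Fin.insertNthEquiv_symm_apply]
    have : i.removeNth x j' = x j := by rw [Fin.removeNth, hj']
    rw [this]
  rw [show μp (N+1) = Measure.pi fun _ => μ1 from rfl, hpre,
    hmp.measure_preimage hT.nullMeasurableSet, Measure.prod_apply_symm hT]
  have : ∀ y : Fin N → ℝ, μ1 ((fun t => (t, y)) ⁻¹' {p : ℝ × (Fin N → ℝ) | p.1 = p.2 j'}) = 0 := by
    intro y
    have : ((fun t => (t, y)) ⁻¹' {p : ℝ × (Fin N → ℝ) | p.1 = p.2 j'}) = {y j'} := by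
      ext t; simp
    rw [this]
    exact measure_singleton _
  simp [this]

lemma measurableSet_inj (N : ℕ) :
    MeasurableSet {x : Fin N → ℝ | Function.Injective x} := by
  have : {x : Fin N → ℝ | Function.Injective x} = ⋂ i, ⋂ j, {x | x i = x j → i = j} := by
    ext x
    simp only [Set.mem_setOf_eq, Set.mem_iInter, Function.Injective]
  rw [this]
  refine MeasurableSet.iInter fun i => MeasurableSet.iInter fun j => ?_
  rcases eq_or_ne i j with rfl | hij
  · simp
  · have : {x : Fin N → ℝ | x i = x j → i = j} = {x | x i = x j}ᶜ := by
      ext x; simp [hij]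
    rw [this]
    exact (measurableSet_eq_fun (measurable_pi_apply i) (measurable_pi_apply j)).compl

lemma null_noninj (N : ℕ) :
    μp (N+1) {x : Fin (N+1) → ℝ | Function.Injective x}ᶜ = 0 := by
  have hsub : {x : Fin (N+1) → ℝ | Function.Injective x}ᶜ
      ⊆ ⋃ i, ⋃ j, {x : Fin (N+1) → ℝ | i ≠ j ∧ x i = x j} := by
    intro x hx
    simp only [Set.mem_compl_iff, Set.mem_setOf_eq, Function.Injective, not_forall] at hx
    obtain ⟨i, j, hxy, hne⟩ := hx
    exact Set.mem_iUnion.2 ⟨i, Set.mem_iUnion.2 ⟨j, hne, hxy⟩⟩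
  refine measure_mono_null hsub
    (measure_iUnion_null fun i => measure_iUnion_null fun j => ?_)
  rcases eq_or_ne i j with rfl | hij
  · simp
  · exact measure_mono_null (fun x hx => hx.2) (null_eq_coord i j hij)

lemma cnt_le {N : ℕ} (x : Fin (N+1) → ℝ) (m : Fin (N+1)) : cnt x m ≤ N := by
  have hsub : (univ.filter fun i => x i < x m) ⊆ univ.erase m := by
    intro i hi
    simp only [Finset.mem_filter, Finset.mem_univ, true_and] at hi
    exact Finset.mem_erase.2 ⟨fun h => absurd hi (h ▸ lt_irrefl _), Finset.mem_univ i⟩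
  have := Finset.card_le_card hsub
  rwa [Finset.card_erase_of_mem (Finset.mem_univ m), Finset.card_univ, Fintype.card_fin,
    Nat.add_sub_cancel] at this

lemma cnt_strictMono {N : ℕ} {x : Fin N → ℝ} {m m' : Fin N} (h : x m < x m') :
    cnt x m < cnt x m' := by
  refine Finset.card_lt_card ⟨fun i hi => ?_, fun hss => ?_⟩
  · simp only [Finset.mem_filter, Finset.mem_univ, true_and] at hi ⊢
    exact hi.trans h
  · have hm : m ∈ univ.filter fun i => x i < x m' := by simp [h]
    have := hss hm
    simp only [Finset.mem_filter, Finset.mem_univ, true_and] at this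
    exact absurd this (lt_irrefl _)

lemma cnt_existsUnique {N : ℕ} {x : Fin (N+1) → ℝ} (hx : Function.Injective x)
    (j : ℕ) (hj : j ≤ N) : ∃! m, cnt x m = j := by
  have hrlt : ∀ m, cnt x m < N + 1 := fun m => Nat.lt_succ_of_le (cnt_le x m)
  set r : Fin (N+1) → Fin (N+1) := fun m => ⟨cnt x m, hrlt m⟩ with hr
  have hinj : Function.Injective r := by
    intro m m' hmm'
    by_contra hne
    have hxne : x m ≠ x m' := fun h => hne (hx h)
    rcases lt_or_gt_of_ne hxne with h | h
    · exact absurd (congrArg Fin.val hmm') (Nat.ne_of_lt (cnt_strictMono h))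
    · exact absurd (congrArg Fin.val hmm').symm (Nat.ne_of_lt (cnt_strictMono h))
  have hsurj : Function.Surjective r := Finite.surjective_of_injective hinj
  obtain ⟨m, hm⟩ := hsurj ⟨j, Nat.lt_succ_of_le hj⟩
  refine ⟨m, congrArg Fin.val hm, fun m' hm' => ?_⟩
  exact hinj (Fin.val_injective (hm'.trans (congrArg Fin.val hm).symm))

lemma measure_cnt (N : ℕ) (m : Fin (N+1)) (j : ℕ) (hj : j ≤ N) :
    μp (N+1) {x | cnt x m = j} = ((N : ENNReal) + 1)⁻¹ := by
  classical
  set I := {x : Fin (N+1) → ℝ | Function.Injective x} with hI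
  set f : Fin (N+1) → Set (Fin (N+1) → ℝ) := fun m' => {x | cnt x m' = j} ∩ I with hf
  have hmf : ∀ m', MeasurableSet (f m') :=
    fun m' => (measurableSet_cnt_eq m' j).inter (measurableSet_inj _)
  have hdisj : Pairwise (Function.onFun Disjoint f) := by
    intro a b hab
    refine Set.disjoint_left.2 fun x hxa hxb => ?_
    obtain ⟨m₀, _, hu⟩ := cnt_existsUnique hxa.2 j hj
    exact hab ((hu a hxa.1).trans (hu b hxb.1).symm)
  have hcover : (⋃ m', f m') = I := by
    ext x
    simp only [hf, Set.mem_iUnion, Set.mem_inter_iff, Set.mem_setOf_eq]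
    constructor
    · rintro ⟨m', _, hxI⟩; exact hxI
    · intro hxI
      obtain ⟨m₀, hm₀, _⟩ := cnt_existsUnique hxI j hj
      exact ⟨m₀, hm₀, hxI⟩
  have hμI : μp (N+1) I = 1 := by
    have := null_noninj N
    rwa [← prob_compl_eq_zero_iff (measurableSet_inj (N+1))] at *
  have hsum : ∑ m' : Fin (N+1), μp (N+1) (f m') = 1 := by
    rw [← tsum_fintype (L := SummationFilter.unconditional _), ← measure_iUnion hdisj hmf, hcover, hμI]
  have hfB : ∀ m', μp (N+1) (f m') = μp (N+1) {x | cnt x m' = j} := by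
    intro m'
    refine measure_inter_conull ?_
    exact null_noninj N
  have hsame : ∀ m', μp (N+1) {x | cnt x m' = j} = μp (N+1) {x | cnt x m = j} :=
    fun m' => measure_cnt_eq_of_swap m' m j
  rw [Finset.sum_congr rfl (fun m' _ => (hfB m').trans (hsame m'))] at hsum
  rw [Finset.sum_const, Finset.card_univ, Fintype.card_fin] at hsum
  have hne : ((N : ENNReal) + 1) ≠ 0 := by simp
  have hnt : ((N : ENNReal) + 1) ≠ ⊤ := by simp
  have hmul : ((N : ENNReal) + 1) * μp (N+1) {x | cnt x m = j} = 1 := by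
    have h2 : ((N + 1 : ℕ) : ENNReal) * μp (N+1) {x | cnt x m = j} = 1 := by
      rw [← nsmul_eq_mul]; exact hsum
    rwa [Nat.cast_add, Nat.cast_one] at h2
  calc μp (N+1) {x | cnt x m = j}
      = ((N : ENNReal)+1)⁻¹ * (((N : ENNReal)+1) * μp (N+1) {x | cnt x m = j}) := by
        rw [← mul_assoc, ENNReal.inv_mul_cancel hne hnt, one_mul]
    _ = ((N : ENNReal)+1)⁻¹ := by rw [hmul, mul_one]


end Measures


lemma cnt_last {n : ℕ} (x : Fin (n+1) → ℝ) :
    cnt x (Fin.last n) = #(univ.filter fun i : Fin n => x i.castSucc < x (Fin.last n)) := by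
  unfold cnt
  rw [Finset.card_filter, Finset.card_filter, Fin.sum_univ_castSucc]
  simp

lemma measure_le_sv (n : ℕ) (k : Fin n) :
    μp (n+1) {x | x (Fin.last n) ≤ sv (fun i => x i.castSucc) k}
      = ((k : ℕ) + 1) * ((n : ENNReal) + 1)⁻¹ := by
  classical
  have hset : {x : Fin (n+1) → ℝ | x (Fin.last n) ≤ sv (fun i => x i.castSucc) k}
      = ⋃ j ∈ Finset.range ((k : ℕ) + 1), {x : Fin (n+1) → ℝ | cnt x (Fin.last n) = j} := by
    ext x
    simp only [Set.mem_setOf_eq, Set.mem_iUnion, Finset.mem_range, le_sv_iff, exists_prop]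
    rw [show #(univ.filter fun i : Fin n => x i.castSucc < x (Fin.last n))
        = cnt x (Fin.last n) from (cnt_last x).symm]
    constructor
    · intro h; exact ⟨cnt x (Fin.last n), by omega, rfl⟩
    · rintro ⟨j, hj, hc⟩; omega
  have hd : Set.PairwiseDisjoint ↑(Finset.range ((k : ℕ) + 1))
      (fun j => {x : Fin (n+1) → ℝ | cnt x (Fin.last n) = j}) := by
    intro a _ b _ hab
    refine Set.disjoint_left.2 fun x hxa hxb => hab ?_
    exact hxa.symm.trans hxb
  rw [hset, measure_biUnion_finset hd fun j _ => measurableSet_cnt_eq _ j]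
  rw [Finset.sum_congr rfl fun j hj => measure_cnt n (Fin.last n) j (by
    simp only [Finset.mem_range] at hj
    have := k.isLt
    omega)]
  rw [Finset.sum_const, Finset.card_range, nsmul_eq_mul]
  push_cast
  ring

lemma map_joint {Ω : Type*} [MeasurableSpace Ω] (P : Measure Ω) [IsProbabilityMeasure P]
    (N : ℕ) (X : Fin N → Ω → ℝ) (hXm : ∀ i, Measurable (X i))
    (hindep : ProbabilityTheory.iIndepFun X P)
    (hunif : ∀ i, P.map (X i) = μ1) :
    P.map (fun ω i => X i ω) = μp N := by
  refine Eq.symm ?_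
  unfold μp
  refine Measure.pi_eq fun s hs => ?_
  rw [Measure.map_apply (measurable_pi_lambda _ hXm) (MeasurableSet.univ_pi hs)]
  have hpre : (fun ω i => X i ω) ⁻¹' Set.univ.pi s
      = ⋂ i ∈ (univ : Finset (Fin N)), X i ⁻¹' s i := by
    ext ω; simp [Set.mem_pi]
  rw [hpre,
    (ProbabilityTheory.iIndepFun_iff_measure_inter_preimage_eq_mul.1 hindep) univ
      (fun i _ => hs i)]
  refine Finset.prod_congr rfl fun i _ => ?_
  rw [← Measure.map_apply (hXm i) (hs i), hunif i]

end CoverageAux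

open CoverageAux

/-- **Exact coverage of the interpolated quantile estimator.** Let `X 1, …, X n, X` be i.i.d.
uniform on `(0,1)` (here `X = X (Fin.last n)` and the order statistics are those of the first
`n` variables), `1 ≤ l ≤ n - 1` and `l/(n+1) ≤ α ≤ (l+1)/(n+1)`.  With
`q̂ = (1 - α(n+1) + l)·X₍l₎ + (α(n+1) - l)·X₍l+1₎`, one has `P(X ≤ q̂) = α`. -/
theorem coverage_interpolated_quantile_uniform {Ω : Type*} [MeasurableSpace Ω]
    (P : Measure Ω) [IsProbabilityMeasure P]
    (n : ℕ) (hn : 2 ≤ n)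
    (X : Fin (n + 1) → Ω → ℝ) (hXm : ∀ i, Measurable (X i))
    (hindep : ProbabilityTheory.iIndepFun X P)
    (hunif : ∀ i, P.map (X i) = volume.restrict (Set.Ioo (0 : ℝ) 1))
    (l : ℕ) (hl1 : 1 ≤ l) (hl2 : l ≤ n - 1)
    (α : ℝ) (hα1 : (l : ℝ) / ((n : ℝ) + 1) ≤ α) (hα2 : α ≤ ((l : ℝ) + 1) / ((n : ℝ) + 1)) :
    P {ω | X (Fin.last n) ω ≤
        (1 - α * ((n : ℝ) + 1) + l) *
            orderStat (fun i : Fin n => X i.castSucc) ⟨l - 1, by omega⟩ ω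
          + (α * ((n : ℝ) + 1) - l) *
            orderStat (fun i : Fin n => X i.castSucc) ⟨l, by omega⟩ ω} =
      ENNReal.ofReal α := by
  classical
  have hln : l < n := by omega
  have hnpos : (0:ℝ) < (n:ℝ) + 1 := by positivity
  set γ : ℝ := α * ((n:ℝ)+1) - l with hγ
  have hγ0 : 0 ≤ γ := by
    rw [div_le_iff₀ hnpos] at hα1
    rw [hγ]; linarith
  have hγ1 : γ ≤ 1 := by
    rw [le_div_iff₀ hnpos] at hα2
    rw [hγ]; linarith
  set k1 : Fin n := ⟨l - 1, by omega⟩ with hk1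
  set k2 : Fin n := ⟨l, hln⟩ with hk2
  set g : (Fin n → ℝ) → ℝ := fun y => (1 - γ) * sv y k1 + γ * sv y k2 with hgdef
  have hgm : Measurable g := ((measurable_sv k1).const_mul _).add ((measurable_sv k2).const_mul _)
  have hg01 : ∀ y : Fin n → ℝ, (∀ i, y i ∈ Set.Ioo (0:ℝ) 1) → g y ∈ Set.Ioo (0:ℝ) 1 := by
    intro y hy
    obtain ⟨ha0, ha1⟩ := sv_mem hy k1
    obtain ⟨hb0, hb1⟩ := sv_mem hy k2
    constructor
    · have hmin : (0:ℝ) < min (sv y k1) (sv y k2) := lt_min ha0 hb0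
      calc (0:ℝ) < min (sv y k1) (sv y k2) := hmin
        _ = (1 - γ) * min (sv y k1) (sv y k2) + γ * min (sv y k1) (sv y k2) := by ring
        _ ≤ g y := add_le_add
            (mul_le_mul_of_nonneg_left (min_le_left _ _) (by linarith))
            (mul_le_mul_of_nonneg_left (min_le_right _ _) hγ0)
    · have hmax : max (sv y k1) (sv y k2) < 1 := max_lt ha1 hb1
      calc g y ≤ (1 - γ) * max (sv y k1) (sv y k2) + γ * max (sv y k1) (sv y k2) := add_le_add
            (mul_le_mul_of_nonneg_left (le_max_left _ _) (by linarith))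
            (mul_le_mul_of_nonneg_left (le_max_right _ _) hγ0)
        _ = max (sv y k1) (sv y k2) := by ring
        _ < 1 := hmax
  have hmap := map_joint P (n+1) X hXm hindep hunif
  have hSm : MeasurableSet {x : Fin (n+1) → ℝ | x (Fin.last n) ≤ g (fun i => x i.castSucc)} :=
    measurableSet_le (measurable_pi_apply _)
      (hgm.comp (measurable_pi_lambda _ fun i => measurable_pi_apply _))
  have hev : {ω | X (Fin.last n) ω ≤
        (1 - α * ((n : ℝ) + 1) + l) *
            orderStat (fun i : Fin n => X i.castSucc) ⟨l - 1, by omega⟩ ω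
          + (α * ((n : ℝ) + 1) - l) *
            orderStat (fun i : Fin n => X i.castSucc) ⟨l, by omega⟩ ω}
      = (fun ω i => X i ω) ⁻¹' {x : Fin (n+1) → ℝ | x (Fin.last n) ≤ g (fun i => x i.castSucc)} := by
    ext ω
    simp only [Set.mem_setOf_eq, Set.mem_preimage, hgdef]
    rw [show (1 : ℝ) - α * ((n : ℝ) + 1) + l = 1 - γ by rw [hγ]; ring]
    rw [show orderStat (fun i : Fin n => X i.castSucc) ⟨l - 1, by omega⟩ ω
        = sv (fun i : Fin n => X i.castSucc ω) k1 from rfl]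
    rw [show orderStat (fun i : Fin n => X i.castSucc) ⟨l, hln⟩ ω
        = sv (fun i : Fin n => X i.castSucc ω) k2 from rfl]
  rw [hev, ← Measure.map_apply (measurable_pi_lambda _ hXm) hSm, hmap,
    fubini_last n g hgm hg01]
  have hint : ∀ k : Fin n, ∫⁻ y, ENNReal.ofReal (sv y k) ∂(μp n)
      = ((k:ℕ)+1) * ((n : ENNReal)+1)⁻¹ := fun k => by
    rw [← fubini_last n (fun y => sv y k) (measurable_sv k) (fun y hy => sv_mem hy k),
      measure_le_sv n k]
  have hsplit : ∫⁻ y, ENNReal.ofReal (g y) ∂(μp n)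
      = ENNReal.ofReal (1-γ) * (((k1:ℕ)+1) * ((n : ENNReal)+1)⁻¹)
        + ENNReal.ofReal γ * (((k2:ℕ)+1) * ((n : ENNReal)+1)⁻¹) := by
    rw [← hint k1, ← hint k2]
    rw [← lintegral_const_mul _ ((measurable_sv k1).ennreal_ofReal),
      ← lintegral_const_mul _ ((measurable_sv k2).ennreal_ofReal),
      ← lintegral_add_left (((measurable_sv k1).ennreal_ofReal).const_mul _)]
    refine lintegral_congr_ae ?_
    filter_upwards [ae_mem_Ioo n] with y hy
    obtain ⟨ha0, _⟩ := sv_mem hy k1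
    obtain ⟨hb0, _⟩ := sv_mem hy k2
    rw [hgdef]
    rw [ENNReal.ofReal_add (by nlinarith) (by nlinarith),
      ENNReal.ofReal_mul (by linarith), ENNReal.ofReal_mul hγ0]
  rw [hsplit]
  have hk1v : ((k1:ℕ) : ENNReal) + 1 = (l : ENNReal) := by
    rw [hk1]
    have : ((l - 1 : ℕ) : ENNReal) + 1 = ((l - 1 + 1 : ℕ) : ENNReal) := by push_cast; ring
    rw [this]
    congr 1
    omega
  have hk2v : ((k2:ℕ) : ENNReal) + 1 = ((l : ENNReal)) + 1 := by rw [hk2]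
  rw [hk1v, hk2v]
  have key : ∀ m : ℕ, ((m : ENNReal)) * ((n : ENNReal)+1)⁻¹
      = ENNReal.ofReal ((m : ℝ) / ((n:ℝ)+1)) := by
    intro m
    rw [ENNReal.ofReal_div_of_pos hnpos, ENNReal.ofReal_natCast, div_eq_mul_inv]
    congr 1
    rw [ENNReal.ofReal_add (by positivity) zero_le_one, ENNReal.ofReal_natCast,
      ENNReal.ofReal_one]
  have hl1e : ((l : ENNReal) + 1) = ((l + 1 : ℕ) : ENNReal) := by push_cast; ring
  rw [hl1e, key l, key (l+1)]
  rw [← ENNReal.ofReal_mul (by linarith), ← ENNReal.ofReal_mul hγ0,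
    ← ENNReal.ofReal_add (mul_nonneg (by linarith) (by positivity)) (mul_nonneg hγ0 (by positivity))]
  congr 1
  rw [hγ]
  push_cast
  field_simp
  ring
end

section
/- Let d ≥ 2 and n ≥ 2d be integers, and let X_1, …, X_n, X be independent random variables each uniformly distributed on (0,1). For j = 1, …, d−1 let l_j be an integer with 1 ≤ l_j ≤ n−1 and l_j/(n+1) ≤ j/d ≤ (l_j+1)/(n+1), and define q̂_j = (1 − (j/d)(n+1) + l_j)·X_{(l_j)} + ((j/d)(n+1) − l_j)·X_{(l_j+1)}, where X_{(l)} is the l-th order statistic of X_1, …, X_n; also set q̂_0 = 0 and q̂_d = 1. Then for every j = 1, …, d one has P(q̂_{j−1} < X ≤ q̂_j) = 1/d. -/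
open MeasureTheory

section AuxiliaryLemmas
open Finset Set



noncomputable def sortedVal {N : ℕ} (f : Fin N → ℝ) (k : Fin N) : ℝ := f (Tuple.sort f k)

lemma sortedVal_monotone {N : ℕ} (f : Fin N → ℝ) : Monotone (sortedVal f) :=
  Tuple.monotone_sort f

lemma sortedVal_apply_mem {N : ℕ} (f : Fin N → ℝ) (k : Fin N) {s : Set ℝ}
    (h : ∀ i, f i ∈ s) : sortedVal f k ∈ s := h _

lemma card_filter_comp_perm {N : ℕ} (p : ℝ → Prop) [DecidablePred p] (f : Fin N → ℝ)
    (σ : Equiv.Perm (Fin N)) :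
    #(univ.filter fun i => p (f (σ i))) = #(univ.filter fun i => p (f i)) := by
  conv_rhs => rw [← Finset.map_univ_equiv σ, Finset.filter_map, Finset.card_map]
  rfl

lemma sortedVal_pred_iff {N : ℕ} (p : ℝ → Prop) [DecidablePred p]
    (hp : ∀ a b : ℝ, a ≤ b → p b → p a) (f : Fin N → ℝ) (k : Fin N) :
    p (sortedVal f k) ↔ (k : ℕ) + 1 ≤ #(univ.filter fun i => p (f i)) := by
  have key : ∀ g : Fin N → ℝ, Monotone g →
      (p (g k) ↔ (k : ℕ) + 1 ≤ #(univ.filter fun i => p (g i))) := by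
    intro g hg
    constructor
    · intro h
      have hsub : Finset.Iic k ⊆ univ.filter fun i => p (g i) := by
        intro i hi
        simp only [Finset.mem_filter, Finset.mem_univ, true_and]
        exact hp _ _ (hg (Finset.mem_Iic.mp hi)) h
      calc (k : ℕ) + 1 = #(Finset.Iic k) := (Fin.card_Iic k).symm
        _ ≤ _ := Finset.card_le_card hsub
    · intro h
      by_contra hpk
      have hsub : (univ.filter fun i => p (g i)) ⊆ Finset.Iio k := by
        intro i hi
        simp only [Finset.mem_filter, Finset.mem_univ, true_and] at hi
        rw [Finset.mem_Iio]
        by_contra hik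
        exact hpk (hp _ _ (hg (le_of_not_gt hik)) hi)
      have := (Finset.card_le_card hsub).trans_eq (Fin.card_Iio k)
      omega
  rw [show sortedVal f k = (f ∘ Tuple.sort f) k from rfl,
    key _ (Tuple.monotone_sort f), ← card_filter_comp_perm p f (Tuple.sort f)]
  rfl

lemma sortedVal_le_iff {N : ℕ} (f : Fin N → ℝ) (k : Fin N) (t : ℝ) :
    sortedVal f k ≤ t ↔ (k : ℕ) + 1 ≤ #(univ.filter fun i => f i ≤ t) :=
  sortedVal_pred_iff (fun x => x ≤ t) (fun _ _ hab hb => hab.trans hb) f k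

lemma le_sortedVal_iff {N : ℕ} (f : Fin N → ℝ) (k : Fin N) (t : ℝ) :
    t ≤ sortedVal f k ↔ #(univ.filter fun i => f i < t) ≤ (k : ℕ) := by
  rw [← not_lt, sortedVal_pred_iff (fun x => x < t) (fun _ _ hab hb => hab.trans_lt hb) f k]
  omega

lemma measurableSet_le_card_filter {N : ℕ} (q : (Fin N → ℝ) → Fin N → Prop)
    [∀ y j, Decidable (q y j)] (hq : ∀ j, MeasurableSet {y | q y j}) (c : ℕ) :
    MeasurableSet {y : Fin N → ℝ | c ≤ #(univ.filter (q y))} := by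
  have : {y : Fin N → ℝ | c ≤ #(univ.filter (q y))}
      = ⋃ S ∈ (univ : Finset (Fin N)).powersetCard c, ⋂ j ∈ (S : Finset (Fin N)), {y | q y j} := by
    ext y
    simp only [Set.mem_setOf_eq, Set.mem_iUnion, Set.mem_iInter, Finset.mem_powersetCard]
    constructor
    · intro h
      obtain ⟨S, hS, hcard⟩ := Finset.exists_subset_card_eq h
      exact ⟨S, ⟨Finset.subset_univ S, hcard⟩, fun j hj =>
        (Finset.mem_filter.mp (hS hj)).2⟩
    · rintro ⟨S, ⟨-, hcard⟩, hall⟩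
      calc c = S.card := hcard.symm
        _ ≤ _ := Finset.card_le_card fun j hj =>
            Finset.mem_filter.mpr ⟨Finset.mem_univ j, hall j hj⟩
  rw [this]
  exact (Finset.measurableSet_biUnion _ fun S _ => Finset.measurableSet_biInter _ fun j _ => hq j)

lemma measurableSet_card_filter_eq {N : ℕ} (q : (Fin N → ℝ) → Fin N → Prop)
    [∀ y j, Decidable (q y j)] (hq : ∀ j, MeasurableSet {y | q y j}) (m : ℕ) :
    MeasurableSet {y : Fin N → ℝ | #(univ.filter (q y)) = m} := by
  have : {y : Fin N → ℝ | #(univ.filter (q y)) = m}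
      = {y : Fin N → ℝ | m ≤ #(univ.filter (q y))}
        \ {y : Fin N → ℝ | m + 1 ≤ #(univ.filter (q y))} := by
    ext y; simp only [Set.mem_setOf_eq, Set.mem_diff]; omega
  rw [this]
  exact (measurableSet_le_card_filter q hq m).diff (measurableSet_le_card_filter q hq (m + 1))

lemma measurable_sortedVal {N : ℕ} (k : Fin N) :
    Measurable fun y : Fin N → ℝ => sortedVal y k := by
  apply measurable_of_Iic
  intro t
  have : (fun y : Fin N → ℝ => sortedVal y k) ⁻¹' Set.Iic t
      = {y : Fin N → ℝ | (k : ℕ) + 1 ≤ #(univ.filter fun i => y i ≤ t)} := by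
    ext y
    simp only [Set.mem_preimage, Set.mem_Iic, Set.mem_setOf_eq, sortedVal_le_iff]
  rw [this]
  exact measurableSet_le_card_filter (fun y i => y i ≤ t)
    (fun j => measurableSet_le (measurable_pi_apply j) measurable_const) _

lemma card_filter_castSucc {n : ℕ} (p : Fin (n + 1) → Prop) [DecidablePred p]
    (h : ¬ p (Fin.last n)) :
    #(univ.filter p) = #(univ.filter fun i : Fin n => p i.castSucc) := by
  have huniv : (univ : Finset (Fin (n+1))).filter p = (univ.map Fin.castSuccEmb).filter p := by
    ext j
    simp only [Finset.mem_filter, Finset.mem_map, Finset.mem_univ, true_and]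
    constructor
    · intro hj
      have hne : j ≠ Fin.last n := fun hjl => h (hjl ▸ hj)
      obtain ⟨i, rfl⟩ := Fin.exists_castSucc_eq.mpr hne
      exact ⟨⟨i, rfl⟩, hj⟩
    · rintro ⟨-, hj⟩; exact hj
  rw [huniv, Finset.filter_map, Finset.card_map]
  rfl


noncomputable def mu01 : Measure ℝ := volume.restrict (Set.Ioo (0 : ℝ) 1)

instance : IsProbabilityMeasure mu01 := by
  constructor
  rw [mu01, Measure.restrict_apply MeasurableSet.univ, Set.univ_inter, Real.volume_Ioo]
  norm_num

lemma mu01_singleton (a : ℝ) : mu01 {a} = 0 := by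
  rw [mu01, Measure.restrict_apply (measurableSet_singleton a)]
  exact measure_mono_null Set.inter_subset_left Real.volume_singleton

lemma mu01_Ioc {a b : ℝ} (h0 : 0 ≤ a) (h1 : b ≤ 1) : mu01 (Set.Ioc a b) = ENNReal.ofReal (b - a) := by
  rw [mu01, Measure.restrict_apply measurableSet_Ioc]
  rcases lt_or_ge b 1 with hb | hb
  · have : Set.Ioc a b ∩ Set.Ioo 0 1 = Set.Ioc a b := by
      apply Set.inter_eq_left.mpr
      intro x hx
      exact ⟨lt_of_le_of_lt h0 hx.1, lt_of_le_of_lt hx.2 hb⟩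
    rw [this, Real.volume_Ioc]
  · have hb1 : b = 1 := le_antisymm h1 hb
    subst hb1
    have : Set.Ioc a 1 ∩ Set.Ioo 0 1 = Set.Ioo a 1 := by
      ext x
      constructor
      · rintro ⟨⟨h1x, h2x⟩, ⟨h3x, h4x⟩⟩; exact ⟨h1x, h4x⟩
      · rintro ⟨h1x, h2x⟩; exact ⟨⟨h1x, h2x.le⟩, ⟨lt_of_le_of_lt h0 h1x, h2x⟩⟩
    rw [this, Real.volume_Ioo]

lemma mu01_Iic {z : ℝ} (h0 : 0 < z) (h1 : z < 1) : mu01 (Set.Iic z) = ENNReal.ofReal z := by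
  rw [mu01, Measure.restrict_apply measurableSet_Iic]
  have : Set.Iic z ∩ Set.Ioo 0 1 = Set.Ioc 0 z := by
    ext x
    constructor
    · rintro ⟨h1x, h2x, h3x⟩; exact ⟨h2x, h1x⟩
    · rintro ⟨h1x, h2x⟩; exact ⟨h2x, h1x, lt_of_le_of_lt h2x h1⟩
  rw [this, Real.volume_Ioc, sub_zero]

section prodlemmas
variable {α : Type*} [MeasurableSpace α] (ν : Measure α) [SFinite ν]

lemma prod_graph_null {h : α → ℝ} (hh : Measurable h) :
    (mu01.prod ν) {p : ℝ × α | p.1 = h p.2} = 0 := by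
  have hms : MeasurableSet {p : ℝ × α | p.1 = h p.2} :=
    measurableSet_eq_fun measurable_fst (hh.comp measurable_snd)
  rw [Measure.prod_apply_symm hms]
  have : ∀ y : α, mu01 ((fun x => (x, y)) ⁻¹' {p : ℝ × α | p.1 = h p.2}) = 0 := by
    intro y
    have : ((fun x => (x, y)) ⁻¹' {p : ℝ × α | p.1 = h p.2}) = {h y} := by
      ext x; simp [Set.mem_preimage]
    rw [this, mu01_singleton]
  simp only [this, lintegral_zero]

lemma prod_Iic_apply {g : α → ℝ} (hg : Measurable g) :
    (mu01.prod ν) {p : ℝ × α | p.1 ≤ g p.2} = ∫⁻ x, mu01 (Set.Iic (g x)) ∂ν := by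
  have hms : MeasurableSet {p : ℝ × α | p.1 ≤ g p.2} :=
    measurableSet_le measurable_fst (hg.comp measurable_snd)
  rw [Measure.prod_apply_symm hms]
  exact lintegral_congr fun y => by congr 1

lemma prod_Ioc_apply {g₁ g₂ : α → ℝ} (h1 : Measurable g₁) (h2 : Measurable g₂) :
    (mu01.prod ν) {p : ℝ × α | g₁ p.2 < p.1 ∧ p.1 ≤ g₂ p.2}
      = ∫⁻ x, mu01 (Set.Ioc (g₁ x) (g₂ x)) ∂ν := by
  have hms : MeasurableSet {p : ℝ × α | g₁ p.2 < p.1 ∧ p.1 ≤ g₂ p.2} :=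
    (measurableSet_lt (h1.comp measurable_snd) measurable_fst).inter
      (measurableSet_le measurable_fst (h2.comp measurable_snd))
  rw [Measure.prod_apply_symm hms]
  exact lintegral_congr fun y => by congr 1

end prodlemmas



noncomputable def piMeas (n : ℕ) : Measure (Fin n → ℝ) := Measure.pi fun _ => mu01

instance piMeas_prob (n : ℕ) : IsProbabilityMeasure (piMeas n) := by
  rw [piMeas]; infer_instance

lemma piMeas_ae_Ioo (n : ℕ) : ∀ᵐ x ∂(piMeas n), ∀ i, x i ∈ Set.Ioo (0:ℝ) 1 := by
  rw [ae_all_iff]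
  intro i
  have hset : {x : Fin n → ℝ | ¬ x i ∈ Set.Ioo (0:ℝ) 1}
      = Set.pi Set.univ (Function.update (fun _ : Fin n => (Set.univ : Set ℝ))
          i (Set.Ioo (0:ℝ) 1)ᶜ) := by
    ext x
    simp only [Set.mem_setOf_eq, Set.mem_pi, Set.mem_univ, true_implies]
    constructor
    · intro hx j
      rcases eq_or_ne j i with rfl | hji
      · simpa using hx
      · simp [Function.update_of_ne hji]
    · intro hx
      have := hx i
      simpa using this
  rw [ae_iff, piMeas, hset, Measure.pi_pi]
  apply Finset.prod_eq_zero (Finset.mem_univ i)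
  rw [Function.update_self, mu01, Measure.restrict_apply (measurableSet_Ioo.compl)]
  simp

lemma piMeas_succAbove_apply {n : ℕ} (i : Fin (n+1)) {S : Set (ℝ × (Fin n → ℝ))}
    (hS : MeasurableSet S) :
    piMeas (n+1) {y | (y i, fun j => y (i.succAbove j)) ∈ S} = (mu01.prod (piMeas n)) S := by
  have hmp := MeasureTheory.measurePreserving_piFinSuccAbove (fun _ : Fin (n+1) => mu01) i
  have hset : {y : Fin (n+1) → ℝ | (y i, fun j => y (i.succAbove j)) ∈ S}
      = (MeasurableEquiv.piFinSuccAbove (fun _ : Fin (n+1) => ℝ) i) ⁻¹' S := by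
    ext y
    exact Iff.rfl
  rw [hset]
  exact hmp.measure_preimage hS.nullMeasurableSet

lemma piMeas_last_apply {n : ℕ} {S : Set (ℝ × (Fin n → ℝ))} (hS : MeasurableSet S) :
    piMeas (n+1) {y | (y (Fin.last n), fun j : Fin n => y j.castSucc) ∈ S}
      = (mu01.prod (piMeas n)) S := by
  have := piMeas_succAbove_apply (Fin.last n) hS
  simpa [Fin.succAbove_last] using this

lemma piMeas_comp_perm {n : ℕ} (σ : Equiv.Perm (Fin n)) {A : Set (Fin n → ℝ)}
    (hA : MeasurableSet A) :
    piMeas n {y | (fun i => y (σ i)) ∈ A} = piMeas n A := by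
  have hmp := MeasureTheory.measurePreserving_piCongrLeft (fun _ : Fin n => mu01) σ.symm
  have he : ∀ (y : Fin n → ℝ) (j : Fin n),
      (MeasurableEquiv.piCongrLeft (fun _ : Fin n => ℝ) σ.symm) y j = y (σ j) := by
    intro y j
    have := MeasurableEquiv.piCongrLeft_apply_apply σ.symm (β := fun _ : Fin n => ℝ) y (σ j)
    simpa using this
  have hset : {y : Fin n → ℝ | (fun i => y (σ i)) ∈ A}
      = (MeasurableEquiv.piCongrLeft (fun _ : Fin n => ℝ) σ.symm) ⁻¹' A := by
    ext y
    have : (MeasurableEquiv.piCongrLeft (fun _ : Fin n => ℝ) σ.symm) y = fun i => y (σ i) :=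
      funext fun j => he y j
    simp [Set.mem_preimage, this]
  rw [hset]
  exact hmp.measure_preimage hA.nullMeasurableSet

section rank
open MeasureTheory Finset Set

def cntA {N : ℕ} (i₀ : Fin N) (m : ℕ) : Set (Fin N → ℝ) :=
  {y | #(univ.filter fun j => y j < y i₀) = m}

lemma measurableSet_cntA {N : ℕ} (i₀ : Fin N) (m : ℕ) : MeasurableSet (cntA i₀ m) :=
  measurableSet_card_filter_eq (fun y j => y j < y i₀)
    (fun j => measurableSet_lt (measurable_pi_apply j) (measurable_pi_apply i₀)) m

lemma count_lt_of_lt {N : ℕ} (y : Fin N → ℝ) {a b : Fin N} (hab : y a < y b) :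
    #(univ.filter fun j => y j < y a) < #(univ.filter fun j => y j < y b) := by
  apply Finset.card_lt_card
  constructor
  · intro j hj
    simp only [Finset.mem_filter, Finset.mem_univ, true_and] at hj ⊢
    exact hj.trans hab
  · intro hsub
    have := hsub (Finset.mem_filter.mpr ⟨Finset.mem_univ a, hab⟩)
    simp only [Finset.mem_filter, Finset.mem_univ, true_and] at this
    exact lt_irrefl _ this

lemma count_inj {N : ℕ} (y : Fin N → ℝ) (hy : Function.Injective y) :
    Function.Injective (fun i => #(univ.filter fun j => y j < y i)) := by
  intro a b hab
  rcases lt_trichotomy (y a) (y b) with h | h | h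
  · exact absurd hab (count_lt_of_lt y h).ne
  · exact hy h
  · exact absurd hab.symm (count_lt_of_lt y h).ne

lemma count_lt_N {N : ℕ} (y : Fin N → ℝ) (i : Fin N) :
    #(univ.filter fun j => y j < y i) < N := by
  have hsub : (univ.filter fun j => y j < y i) ⊆ univ.erase i := by
    intro j hj
    simp only [Finset.mem_filter, Finset.mem_univ, true_and] at hj
    exact Finset.mem_erase.mpr ⟨fun h => lt_irrefl _ (h ▸ hj), Finset.mem_univ j⟩
  have := Finset.card_le_card hsub
  rw [Finset.card_erase_of_mem (Finset.mem_univ i), Finset.card_univ, Fintype.card_fin] at this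
  have hN : 0 < N := i.pos
  omega

lemma exists_count_eq {N : ℕ} (y : Fin N → ℝ) (hy : Function.Injective y) {m : ℕ}
    (hm : m < N) : ∃ i, #(univ.filter fun j => y j < y i) = m := by
  set c : Fin N → Fin N := fun i => ⟨_, count_lt_N y i⟩ with hc
  have hcinj : Function.Injective c := by
    intro a b hab
    exact count_inj y hy (by simpa [hc, Fin.mk.injEq] using hab)
  have hcsurj := Finite.surjective_of_injective hcinj
  obtain ⟨i, hi⟩ := hcsurj ⟨m, hm⟩
  exact ⟨i, by simpa [hc, Fin.mk.injEq] using hi⟩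

lemma noninj_null (N : ℕ) : piMeas (N+1) {y : Fin (N+1) → ℝ | ¬ Function.Injective y} = 0 := by
  apply measure_mono_null (t := ⋃ (a : Fin (N+1)) (b : Fin (N+1)) (_ : b ≠ a), {y | y a = y b})
  · intro y hy
    rw [Set.mem_setOf_eq, Function.not_injective_iff] at hy
    obtain ⟨a, b, hab, hne⟩ := hy
    exact Set.mem_iUnion.mpr ⟨a, Set.mem_iUnion.mpr ⟨b, Set.mem_iUnion.mpr ⟨hne.symm, hab⟩⟩⟩
  · refine measure_iUnion_null fun a => measure_iUnion_null fun b => measure_iUnion_null fun hab => ?_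
    obtain ⟨j', hj'⟩ := Fin.exists_succAbove_eq hab
    have : {y : Fin (N+1) → ℝ | y a = y b}
        = {y : Fin (N+1) → ℝ | (y a, fun j => y (a.succAbove j)) ∈ {p : ℝ × (Fin N → ℝ) | p.1 = p.2 j'}} := by
      ext y; simp [hj']
    have hS : MeasurableSet {p : ℝ × (Fin N → ℝ) | p.1 = p.2 j'} :=
      measurableSet_eq_fun measurable_fst ((measurable_pi_apply j').comp measurable_snd)
    rw [this, piMeas_succAbove_apply a hS]
    exact prod_graph_null (piMeas N) (measurable_pi_apply j')

lemma rank_measure {n : ℕ} (i₀ : Fin (n+1)) {m : ℕ} (hm : m ≤ n) :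
    piMeas (n+1) (cntA i₀ m) = ((n : ENNReal) + 1)⁻¹ := by
  have hperm : ∀ i₁ : Fin (n+1), piMeas (n+1) (cntA i₁ m) = piMeas (n+1) (cntA i₀ m) := by
    intro i₁
    set σ : Equiv.Perm (Fin (n+1)) := Equiv.swap i₀ i₁ with hσ
    have hset : {y : Fin (n+1) → ℝ | (fun i => y (σ i)) ∈ cntA i₀ m} = cntA (σ i₀) m := by
      ext y
      simp only [cntA, Set.mem_setOf_eq]
      rw [card_filter_comp_perm (fun x => x < y (σ i₀)) y σ]
    have := piMeas_comp_perm σ (measurableSet_cntA i₀ m)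
    rw [hset] at this
    rw [← this, hσ, Equiv.swap_apply_left]
  have hsum : ∑ i : Fin (n+1), piMeas (n+1) (cntA i m) = 1 := by
    have hdisj : Pairwise (Function.onFun (AEDisjoint (piMeas (n+1))) fun i => cntA i m) := by
      intro a b hab
      refine measure_mono_null (fun y hy => ?_) (noninj_null n)
      rcases hy with ⟨h1, h2⟩
      intro hinj
      exact hab (count_inj y hinj (h1.trans h2.symm))
    have hU := measure_iUnion₀ hdisj (fun i => (measurableSet_cntA i m).nullMeasurableSet)
    have hcover : piMeas (n+1) (⋃ i, cntA i m) = 1 := by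
      refine le_antisymm prob_le_one ?_
      have h1 : (1 : ENNReal) = piMeas (n+1) Set.univ := (measure_univ).symm
      rw [h1]
      have hsub : (Set.univ : Set (Fin (n+1) → ℝ))
          ⊆ (⋃ i, cntA i m) ∪ {y | ¬ Function.Injective y} := by
        intro y _
        by_cases hinj : Function.Injective y
        · obtain ⟨i, hi⟩ := exists_count_eq y hinj (show m < n + 1 by omega)
          exact Or.inl (Set.mem_iUnion.mpr ⟨i, hi⟩)
        · exact Or.inr hinj
      calc piMeas (n+1) Set.univ ≤ piMeas (n+1) ((⋃ i, cntA i m) ∪ {y | ¬ Function.Injective y}) :=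
            measure_mono hsub
        _ ≤ piMeas (n+1) (⋃ i, cntA i m) + piMeas (n+1) {y | ¬ Function.Injective y} :=
            measure_union_le _ _
        _ = piMeas (n+1) (⋃ i, cntA i m) := by rw [noninj_null n, add_zero]
    rw [← hcover, hU, tsum_fintype]
  have hconst : ∑ i : Fin (n+1), piMeas (n+1) (cntA i m)
      = ((n : ENNReal) + 1) * piMeas (n+1) (cntA i₀ m) := by
    rw [Finset.sum_congr rfl (fun i _ => hperm i), Finset.sum_const, Finset.card_univ,
      Fintype.card_fin, nsmul_eq_mul]
    push_cast
    ring
  rw [hconst] at hsum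
  have hne : ((n : ENNReal) + 1) ≠ 0 := by simp
  have hnetop : ((n : ENNReal) + 1) ≠ ⊤ := by
    simp [ENNReal.add_eq_top]
  calc piMeas (n+1) (cntA i₀ m)
      = ((n : ENNReal) + 1)⁻¹ * (((n : ENNReal) + 1) * piMeas (n+1) (cntA i₀ m)) := by
        rw [← mul_assoc, ENNReal.inv_mul_cancel hne hnetop, one_mul]
    _ = ((n : ENNReal) + 1)⁻¹ := by rw [hsum, mul_one]

end rank
section bridge
open MeasureTheory Finset Set

lemma integrable_of_mem_Icc {α : Type*} [MeasurableSpace α] (ν : Measure α)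
    [IsProbabilityMeasure ν] {g : α → ℝ} (hg : Measurable g)
    (hb : ∀ᵐ x ∂ν, g x ∈ Set.Icc (0:ℝ) 1) : Integrable g ν := by
  refine (integrable_const (1:ℝ)).mono' hg.aestronglyMeasurable ?_
  filter_upwards [hb] with x hx
  rw [Real.norm_eq_abs, abs_le]
  exact ⟨by linarith [hx.1], hx.2⟩

lemma pi_bridge {n : ℕ} {g : (Fin n → ℝ) → ℝ} (hg : Measurable g)
    (hb : ∀ᵐ x ∂(piMeas n), g x ∈ Set.Ioo (0:ℝ) 1) :
    piMeas (n+1) {y | y (Fin.last n) ≤ g (fun i => y i.castSucc)}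
      = ENNReal.ofReal (∫ x, g x ∂(piMeas n)) := by
  have hS : MeasurableSet {p : ℝ × (Fin n → ℝ) | p.1 ≤ g p.2} :=
    measurableSet_le measurable_fst (hg.comp measurable_snd)
  have h1 : {y : Fin (n+1) → ℝ | y (Fin.last n) ≤ g (fun i => y i.castSucc)}
      = {y : Fin (n+1) → ℝ | (y (Fin.last n), fun j : Fin n => y j.castSucc)
          ∈ {p : ℝ × (Fin n → ℝ) | p.1 ≤ g p.2}} := rfl
  rw [h1, piMeas_last_apply hS, prod_Iic_apply _ hg]
  have h2 : ∫⁻ x, mu01 (Set.Iic (g x)) ∂(piMeas n)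
      = ∫⁻ x, ENNReal.ofReal (g x) ∂(piMeas n) := by
    refine lintegral_congr_ae ?_
    filter_upwards [hb] with x hx
    exact mu01_Iic hx.1 hx.2
  rw [h2]
  refine (ofReal_integral_eq_lintegral_ofReal ?_ ?_).symm
  · exact integrable_of_mem_Icc _ hg (hb.mono fun x hx => ⟨hx.1.le, hx.2.le⟩)
  · exact hb.mono fun x hx => hx.1.le

lemma exch {n : ℕ} (k : Fin n) :
    piMeas (n+1) {y | y (Fin.last n) ≤ sortedVal (fun i : Fin n => y i.castSucc) k}
      = ((k : ℕ) + 1 : ENNReal) * ((n : ENNReal) + 1)⁻¹ := by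
  have hset : {y : Fin (n+1) → ℝ | y (Fin.last n) ≤ sortedVal (fun i : Fin n => y i.castSucc) k}
      = ⋃ m ∈ Finset.range ((k:ℕ)+1), cntA (Fin.last n) m := by
    ext y
    simp only [Set.mem_setOf_eq, Set.mem_iUnion, Finset.mem_range, cntA]
    rw [le_sortedVal_iff,
      ← card_filter_castSucc (fun j => y j < y (Fin.last n)) (lt_irrefl _)]
    constructor
    · intro h; exact ⟨_, by omega, rfl⟩
    · rintro ⟨m, hm, hcard⟩; omega
  rw [hset, measure_biUnion_finset ?disj (fun m _ => measurableSet_cntA _ m)]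
  case disj =>
    intro a ha b hb hab
    rw [Function.onFun, Set.disjoint_left]
    intro y hy1 hy2
    exact hab (hy1.symm.trans hy2)
  rw [Finset.sum_congr rfl (fun m hm => rank_measure (Fin.last n)
    (by simp only [Finset.mem_range] at hm; omega))]
  rw [Finset.sum_const, Finset.card_range, nsmul_eq_mul]
  push_cast
  ring

lemma ofReal_frac (a b : ℕ) :
    ENNReal.ofReal (((a : ℝ) + 1) / ((b : ℝ) + 1)) = ((a : ENNReal) + 1) * ((b : ENNReal) + 1)⁻¹ := by
  rw [ENNReal.ofReal_div_of_pos (by positivity), div_eq_mul_inv]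
  congr 1
  · rw [ENNReal.ofReal_add (Nat.cast_nonneg a) zero_le_one, ENNReal.ofReal_natCast,
      ENNReal.ofReal_one]
  · rw [ENNReal.ofReal_add (Nat.cast_nonneg b) zero_le_one, ENNReal.ofReal_natCast,
      ENNReal.ofReal_one]

lemma integral_sortedVal {n : ℕ} (k : Fin n) :
    ∫ x, sortedVal x k ∂(piMeas n) = ((k : ℕ) + 1) / ((n : ℝ) + 1) := by
  have hae : ∀ᵐ x ∂(piMeas n), sortedVal x k ∈ Set.Ioo (0:ℝ) 1 :=
    (piMeas_ae_Ioo n).mono fun x hx => sortedVal_apply_mem x k hx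
  have h1 := pi_bridge (measurable_sortedVal k) hae
  have h2 : ENNReal.ofReal (∫ x, sortedVal x k ∂(piMeas n))
      = ((k : ℕ) + 1 : ENNReal) * ((n : ENNReal) + 1)⁻¹ := h1.symm.trans (exch k)
  rw [← ofReal_frac] at h2
  have hInn : 0 ≤ ∫ x, sortedVal x k ∂(piMeas n) :=
    integral_nonneg_of_ae (hae.mono fun x hx => hx.1.le)
  exact (ENNReal.ofReal_eq_ofReal_iff hInn (by positivity)).mp h2

end bridge
section cell
open MeasureTheory Finset Set

lemma pi_cell {n : ℕ} {g₁ g₂ : (Fin n → ℝ) → ℝ} (h1 : Measurable g₁) (h2 : Measurable g₂)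
    (hb : ∀ᵐ x ∂(piMeas n), 0 ≤ g₁ x ∧ g₁ x ≤ g₂ x ∧ g₂ x ≤ 1) :
    piMeas (n+1) {y | g₁ (fun i => y i.castSucc) < y (Fin.last n)
        ∧ y (Fin.last n) ≤ g₂ (fun i => y i.castSucc)}
      = ENNReal.ofReal ((∫ x, g₂ x ∂(piMeas n)) - ∫ x, g₁ x ∂(piMeas n)) := by
  have hS : MeasurableSet {p : ℝ × (Fin n → ℝ) | g₁ p.2 < p.1 ∧ p.1 ≤ g₂ p.2} :=
    (measurableSet_lt (h1.comp measurable_snd) measurable_fst).inter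
      (measurableSet_le measurable_fst (h2.comp measurable_snd))
  have hev : {y : Fin (n+1) → ℝ | g₁ (fun i => y i.castSucc) < y (Fin.last n)
        ∧ y (Fin.last n) ≤ g₂ (fun i => y i.castSucc)}
      = {y : Fin (n+1) → ℝ | (y (Fin.last n), fun j : Fin n => y j.castSucc)
          ∈ {p : ℝ × (Fin n → ℝ) | g₁ p.2 < p.1 ∧ p.1 ≤ g₂ p.2}} := rfl
  rw [hev, piMeas_last_apply hS, prod_Ioc_apply _ h1 h2]
  have hint1 : Integrable g₁ (piMeas n) :=
    integrable_of_mem_Icc _ h1 (hb.mono fun x hx => ⟨hx.1, hx.2.1.trans hx.2.2⟩)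
  have hint2 : Integrable g₂ (piMeas n) :=
    integrable_of_mem_Icc _ h2 (hb.mono fun x hx => ⟨hx.1.trans hx.2.1, hx.2.2⟩)
  have h3 : ∫⁻ x, mu01 (Set.Ioc (g₁ x) (g₂ x)) ∂(piMeas n)
      = ∫⁻ x, ENNReal.ofReal (g₂ x - g₁ x) ∂(piMeas n) := by
    refine lintegral_congr_ae ?_
    filter_upwards [hb] with x hx
    exact mu01_Ioc hx.1 hx.2.2
  rw [h3]
  have h4 := ofReal_integral_eq_lintegral_ofReal (hint2.sub hint1)
    (hb.mono fun x hx => by simp [Pi.sub_apply, sub_nonneg, hx.2.1])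
  rw [integral_sub' hint2 hint1] at h4
  exact h4.symm

lemma map_eq_piMeas {Ω : Type*} [MeasurableSpace Ω] (P : Measure Ω) {N : ℕ}
    (X : Fin N → Ω → ℝ) (hXm : ∀ i, Measurable (X i))
    (hindep : ProbabilityTheory.iIndepFun X P)
    (hunif : ∀ i, P.map (X i) = mu01) :
    P.map (fun ω i => X i ω) = piMeas N := by
  rw [piMeas]
  refine (Measure.pi_eq (μ := fun _ : Fin N => mu01) fun s hs => ?_).symm
  rw [Measure.map_apply (measurable_pi_lambda _ hXm) (MeasurableSet.univ_pi hs)]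
  have hpre : (fun ω i => X i ω) ⁻¹' (Set.pi Set.univ s) = ⋂ i, X i ⁻¹' s i := by
    ext ω; simp [Set.mem_pi]
  rw [hpre, hindep.meas_iInter (fun i => ⟨s i, hs i, rfl⟩)]
  exact Finset.prod_congr rfl fun i _ => by rw [← hunif i, Measure.map_apply (hXm i) (hs i)]

noncomputable def Gfun (d n : ℕ) (l : ℕ → ℕ) (m : ℕ) (x : Fin n → ℝ) : ℝ :=
  if h : (1 ≤ m ∧ m ≤ d - 1) ∧ l m - 1 < n ∧ l m < n then
    (1 - (m:ℝ)/d*((n:ℝ)+1) + l m) * sortedVal x ⟨l m - 1, h.2.1⟩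
      + ((m:ℝ)/d*((n:ℝ)+1) - l m) * sortedVal x ⟨l m, h.2.2⟩
  else if m = 0 then 0 else 1

lemma Gfun_measurable (d n : ℕ) (l : ℕ → ℕ) (m : ℕ) : Measurable (Gfun d n l m) := by
  unfold Gfun
  split_ifs with h h0
  · exact ((measurable_sortedVal _).const_mul _).add ((measurable_sortedVal _).const_mul _)
  · exact measurable_const
  · exact measurable_const

end cell

end AuxiliaryLemmas

set_option maxHeartbeats 2000000 in
/-- **Each cell of the estimated left-to-right partition has probability `1/d`.**
Let `d ≥ 2`, `n ≥ 2d`, and let `X 1, …, X n, X` be i.i.d. uniform on `(0,1)` (here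
`X = X (Fin.last n)`).  For `j = 1, …, d-1`, `q̂ j` is the interpolated sample quantile at
level `j/d` built from the order statistics of the first `n` variables (with
`1 ≤ l j ≤ n - 1` and `l j/(n+1) ≤ j/d ≤ (l j + 1)/(n+1)`), and `q̂ 0 = 0`, `q̂ d = 1`.
Then `P(q̂ (j-1) < X ≤ q̂ j) = 1/d` for every `j = 1, …, d`. -/
theorem estimated_partition_left_to_right {Ω : Type*} [MeasurableSpace Ω]
    (P : Measure Ω) [IsProbabilityMeasure P]
    (d n : ℕ) (hd : 2 ≤ d) (hn : 2 * d ≤ n)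
    (X : Fin (n + 1) → Ω → ℝ) (hXm : ∀ i, Measurable (X i))
    (hindep : ProbabilityTheory.iIndepFun X P)
    (hunif : ∀ i, P.map (X i) = volume.restrict (Set.Ioo (0 : ℝ) 1))
    (l : ℕ → ℕ) (hl1 : ∀ j, 1 ≤ j → j ≤ d - 1 → 1 ≤ l j) (hl2 : ∀ j, 1 ≤ j → j ≤ d - 1 → l j ≤ n - 1)
    (hl3 : ∀ j, 1 ≤ j → j ≤ d - 1 → (l j : ℝ) / ((n : ℝ) + 1) ≤ (j : ℝ) / d)
    (hl4 : ∀ j, 1 ≤ j → j ≤ d - 1 → (j : ℝ) / d ≤ ((l j : ℝ) + 1) / ((n : ℝ) + 1))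
    (qhat : ℕ → Ω → ℝ)
    (hqhat : ∀ j (h1 : 1 ≤ j) (h2 : j ≤ d - 1), ∀ ω, qhat j ω =
      (1 - (j : ℝ) / d * ((n : ℝ) + 1) + l j) *
          orderStat (fun i : Fin n => X i.castSucc) ⟨l j - 1, by have := hl2 j h1 h2; have := hl1 j h1 h2; omega⟩ ω
        + ((j : ℝ) / d * ((n : ℝ) + 1) - l j) *
          orderStat (fun i : Fin n => X i.castSucc) ⟨l j, by have := hl2 j h1 h2; omega⟩ ω)
    (hqhat0 : ∀ ω, qhat 0 ω = 0) (hqhatd : ∀ ω, qhat d ω = 1) :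
    ∀ j, 1 ≤ j → j ≤ d →
      P {ω | qhat (j - 1) ω < X (Fin.last n) ω ∧ X (Fin.last n) ω ≤ qhat j ω} =
        (d : ENNReal)⁻¹ := by
  intro j hj1 hjd
  have hn0 : 0 < n := by omega
  have hd0 : (0:ℝ) < (d:ℝ) := by exact_mod_cast (by omega : 0 < d)
  have hn1 : (0:ℝ) < (n:ℝ) + 1 := by positivity
  set T : Ω → (Fin (n+1) → ℝ) := fun ω i => X i ω with hTdef
  have hTmeas : Measurable T := measurable_pi_lambda _ hXm
  have hmap : P.map T = piMeas (n+1) := map_eq_piMeas P X hXm hindep (fun i => hunif i)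
  set G : ℕ → (Fin n → ℝ) → ℝ := Gfun d n l with hGdef
  have hGmeas : ∀ m, Measurable (G m) := fun m => Gfun_measurable d n l m
  have hGpos : ∀ m (hm1 : 1 ≤ m) (hm2 : m ≤ d - 1), ∀ x : Fin n → ℝ, G m x =
      (1 - (m:ℝ)/d*((n:ℝ)+1) + l m) * sortedVal x ⟨l m - 1, by
          have := hl1 m hm1 hm2; have := hl2 m hm1 hm2; omega⟩
      + ((m:ℝ)/d*((n:ℝ)+1) - l m) * sortedVal x ⟨l m, by
          have := hl2 m hm1 hm2; omega⟩ := by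
    intro m hm1 hm2 x
    have h12 := hl1 m hm1 hm2
    have h22 := hl2 m hm1 hm2
    have hcond : (1 ≤ m ∧ m ≤ d - 1) ∧ l m - 1 < n ∧ l m < n :=
      ⟨⟨hm1, hm2⟩, by omega, by omega⟩
    rw [hGdef]
    unfold Gfun
    rw [dif_pos hcond]
  have hG0 : ∀ x : Fin n → ℝ, G 0 x = 0 := by
    intro x
    have hcond : ¬((1 ≤ 0 ∧ 0 ≤ d - 1) ∧ l 0 - 1 < n ∧ l 0 < n) := by omega
    rw [hGdef]; unfold Gfun; rw [dif_neg hcond, if_pos rfl]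
  have hGd : ∀ x : Fin n → ℝ, G d x = 1 := by
    intro x
    have hcond : ¬((1 ≤ d ∧ d ≤ d - 1) ∧ l d - 1 < n ∧ l d < n) := by omega
    rw [hGdef]; unfold Gfun; rw [dif_neg hcond, if_neg (by omega : ¬ d = 0)]
  have hGq : ∀ m, m ≤ d → ∀ ω, qhat m ω = G m (fun i => X i.castSucc ω) := by
    intro m hmd ω
    by_cases h : 1 ≤ m ∧ m ≤ d - 1
    · rw [hqhat m h.1 h.2 ω, hGpos m h.1 h.2]
      rfl
    · rcases Nat.eq_zero_or_pos m with rfl | hm1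
      · rw [hqhat0 ω, hG0]
      · have hmd' : m = d := by omega
        subst hmd'
        rw [hqhatd ω, hGd]
  have hint : ∀ k : Fin n, Integrable (fun x => sortedVal x k) (piMeas n) := fun k =>
    integrable_of_mem_Icc _ (measurable_sortedVal k) ((piMeas_ae_Ioo n).mono fun x hx =>
      ⟨(sortedVal_apply_mem x k hx).1.le, (sortedVal_apply_mem x k hx).2.le⟩)
  have hGint : ∀ m, m ≤ d → ∫ x, G m x ∂(piMeas n) = (m:ℝ) / d := by
    intro m hmd
    by_cases h : 1 ≤ m ∧ m ≤ d - 1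
    · obtain ⟨hm1, hm2⟩ := h
      have h12 := hl1 m hm1 hm2
      have h22 := hl2 m hm1 hm2
      simp only [hGpos m hm1 hm2]
      rw [integral_add ((hint _).const_mul _) ((hint _).const_mul _),
        integral_const_mul, integral_const_mul, integral_sortedVal, integral_sortedVal]
      simp only [Fin.val_mk]
      rw [Nat.cast_sub h12, Nat.cast_one]
      field_simp
      ring
    · rcases Nat.eq_zero_or_pos m with rfl | hm1
      · simp only [hG0, integral_zero, Nat.cast_zero, zero_div]
      · have hmd' : m = d := by omega
        subst hmd'
        simp only [hGd, integral_const, probReal_univ, ENNReal.toReal_one, smul_eq_mul, one_mul]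
        rw [div_self hd0.ne']
  have hbnd : ∀ m (hm1 : 1 ≤ m) (hm2 : m ≤ d - 1), ∀ x : Fin n → ℝ,
      (∀ i, x i ∈ Set.Ioo (0:ℝ) 1) →
      sortedVal x ⟨l m - 1, by have := hl1 m hm1 hm2; have := hl2 m hm1 hm2; omega⟩ ≤ G m x
      ∧ G m x ≤ sortedVal x ⟨l m, by have := hl2 m hm1 hm2; omega⟩ := by
    intro m hm1 hm2 x hx
    have h12 := hl1 m hm1 hm2
    have h22 := hl2 m hm1 hm2
    have hAB : sortedVal x ⟨l m - 1, by omega⟩ ≤ sortedVal x ⟨l m, by omega⟩ :=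
      sortedVal_monotone x (by rw [Fin.mk_le_mk]; omega)
    have hc2a : (l m : ℝ) ≤ (m:ℝ)/d*((n:ℝ)+1) := by
      have h3 := (div_le_iff₀ hn1).mp (hl3 m hm1 hm2)
      linarith
    have hc2b : (m:ℝ)/d*((n:ℝ)+1) ≤ (l m : ℝ) + 1 := by
      have h4 := (le_div_iff₀ hn1).mp (hl4 m hm1 hm2)
      linarith
    rw [hGpos m hm1 hm2]
    have e1 : (0:ℝ) ≤ (m:ℝ)/d*((n:ℝ)+1) - l m := by linarith
    have e3 : (0:ℝ) ≤ 1 - ((m:ℝ)/d*((n:ℝ)+1) - (l m : ℝ)) := by linarith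
    have e2 : (0:ℝ) ≤ sortedVal x ⟨l m, by omega⟩ - sortedVal x ⟨l m - 1, by omega⟩ := by
      linarith
    constructor
    · nlinarith [mul_nonneg e1 e2]
    · nlinarith [mul_nonneg e3 e2]
  have hord : ∀ᵐ x ∂(piMeas n), 0 ≤ G (j-1) x ∧ G (j-1) x ≤ G j x ∧ G j x ≤ 1 := by
    filter_upwards [piMeas_ae_Ioo n] with x hx
    by_cases hj1' : j = 1
    · subst hj1'
      obtain ⟨hb1, hb2⟩ := hbnd 1 le_rfl (by omega) x hx
      simp only [Nat.sub_self, hG0]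
      exact ⟨le_rfl, (sortedVal_apply_mem x _ hx).1.le.trans hb1,
        hb2.trans (sortedVal_apply_mem x _ hx).2.le⟩
    by_cases hjd' : j = d
    · rw [hjd']
      obtain ⟨hb1, hb2⟩ := hbnd (d-1) (by omega) le_rfl x hx
      rw [hGd]
      exact ⟨(sortedVal_apply_mem x _ hx).1.le.trans hb1,
        hb2.trans (sortedVal_apply_mem x _ hx).2.le, le_rfl⟩
    · have hj2 : 2 ≤ j := by omega
      have hjle : j ≤ d - 1 := by omega
      obtain ⟨hb1, hb2⟩ := hbnd j (by omega) hjle x hx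
      obtain ⟨hb1', hb2'⟩ := hbnd (j-1) (by omega) (by omega) x hx
      refine ⟨(sortedVal_apply_mem x _ hx).1.le.trans hb1', ?_,
        hb2.trans (sortedVal_apply_mem x _ hx).2.le⟩
      have hcast : ((j - 1 : ℕ) : ℝ) = (j:ℝ) - 1 := by
        rw [Nat.cast_sub (by omega : 1 ≤ j), Nat.cast_one]
      have htlt : ((j-1:ℕ):ℝ)/d*((n:ℝ)+1) < (j:ℝ)/d*((n:ℝ)+1) := by
        rw [hcast]
        apply mul_lt_mul_of_pos_right _ hn1
        rw [div_lt_div_iff₀ hd0 hd0]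
        nlinarith
      have hlm : l (j-1) ≤ l j := by
        have h1 : (l (j-1) : ℝ) ≤ ((j-1:ℕ):ℝ)/d*((n:ℝ)+1) := by
          have := (div_le_iff₀ hn1).mp (hl3 (j-1) (by omega) (by omega))
          linarith
        have h2 : ((j:ℕ):ℝ)/d*((n:ℝ)+1) ≤ (l j : ℝ) + 1 := by
          have := (le_div_iff₀ hn1).mp (hl4 j (by omega) hjle)
          linarith
        have h3 : (l (j-1) : ℝ) < (l j : ℝ) + 1 := lt_of_le_of_lt h1 (lt_of_lt_of_le htlt h2)
        have h4 : l (j-1) < l j + 1 := by exact_mod_cast h3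
        omega
      rcases eq_or_lt_of_le hlm with heq | hlt
      · rw [hGpos (j-1) (by omega) (by omega), hGpos j (by omega) hjle]
        have hk1 : (⟨l (j-1) - 1, by
              have := hl1 (j-1) (by omega) (by omega)
              have := hl2 (j-1) (by omega) (by omega); omega⟩ : Fin n)
            = ⟨l j - 1, by have := hl1 j (by omega) hjle; have := hl2 j (by omega) hjle; omega⟩ :=
          Fin.mk_eq_mk.mpr (by omega)
        have hk2 : (⟨l (j-1), by have := hl2 (j-1) (by omega) (by omega); omega⟩ : Fin n)
            = ⟨l j, by have := hl2 j (by omega) hjle; omega⟩ :=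
          Fin.mk_eq_mk.mpr (by omega)
        rw [hk1, hk2]
        have hcastl : ((l (j-1) : ℕ) : ℝ) = ((l j : ℕ) : ℝ) := by rw [heq]
        have hAB : sortedVal x ⟨l j - 1, by
              have := hl1 j (by omega) hjle; have := hl2 j (by omega) hjle; omega⟩
            ≤ sortedVal x ⟨l j, by have := hl2 j (by omega) hjle; omega⟩ :=
          sortedVal_monotone x (by rw [Fin.mk_le_mk]; omega)
        nlinarith [mul_nonneg (le_of_lt (sub_pos.mpr htlt)) (sub_nonneg.mpr hAB), hcastl]
      · calc G (j-1) x ≤ sortedVal x ⟨l (j-1), by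
              have := hl2 (j-1) (by omega) (by omega); omega⟩ := hb2'
          _ ≤ sortedVal x ⟨l j - 1, by
              have := hl1 j (by omega) hjle; have := hl2 j (by omega) hjle; omega⟩ :=
            sortedVal_monotone x (by rw [Fin.mk_le_mk]; omega)
          _ ≤ G j x := hb1
  have hres : Measurable (fun y : Fin (n+1) → ℝ => fun i : Fin n => y i.castSucc) :=
    measurable_pi_lambda _ fun i => measurable_pi_apply _
  have hCmeas : MeasurableSet {y : Fin (n+1) → ℝ |
      G (j-1) (fun i => y i.castSucc) < y (Fin.last n)
      ∧ y (Fin.last n) ≤ G j (fun i => y i.castSucc)} :=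
    (measurableSet_lt ((hGmeas (j-1)).comp hres) (measurable_pi_apply _)).inter
      (measurableSet_le (measurable_pi_apply _) ((hGmeas j).comp hres))
  have hev : {ω | qhat (j - 1) ω < X (Fin.last n) ω ∧ X (Fin.last n) ω ≤ qhat j ω}
      = T ⁻¹' {y : Fin (n+1) → ℝ | G (j-1) (fun i => y i.castSucc) < y (Fin.last n)
          ∧ y (Fin.last n) ≤ G j (fun i => y i.castSucc)} := by
    ext ω
    simp only [Set.mem_setOf_eq, Set.mem_preimage]
    rw [hGq (j-1) (by omega) ω, hGq j hjd ω]
  rw [hev, ← Measure.map_apply hTmeas hCmeas, hmap,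
    pi_cell (hGmeas (j-1)) (hGmeas j) hord, hGint j hjd, hGint (j-1) (by omega)]
  have hcast : ((j - 1 : ℕ) : ℝ) = (j:ℝ) - 1 := by
    rw [Nat.cast_sub (by omega : 1 ≤ j), Nat.cast_one]
  rw [hcast]
  have hfrac : (j:ℝ)/d - ((j:ℝ)-1)/d = 1/d := by field_simp; ring
  rw [hfrac, one_div, ENNReal.ofReal_inv_of_pos hd0, ENNReal.ofReal_natCast]
end
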